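/- A contract automaton 𝒜 admits weak agreement if and only if max γ ≥ 0, where the maximum is over real γ and integer flows x ∈ F_{q₀,q_f} subject to Σ_{t∈T} aⁱ_t x_t ≥ γ for every request action index i; here aⁱ_t is +1 if transition t carries an offer on action i, −1 if it carries a request on action i, and 0 otherwise. -/

import Mathlib

/-- The net flow at state `q`: inflow (over the backward star of `q`) minus
outflow (over the forward star of `q`). -/
def netFlow {Q Act R : Type} [DecidableEq Q] [AddCommGroup R]
    (T : Finset (Q × Act × Q)) (x : Q × Act × Q → R) (q : Q) : R :=
  (∑ t ∈ T.filter (fun t => t.2.2 = q), x t) -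
    ∑ t ∈ T.filter (fun t => t.1 = q), x t

/-- `x` is a valid flow from `q0` to `qf` on the transitions `T`: it is
supported on `T`, satisfies flow conservation (net flow −1 at the source `q0`,
+1 at the sink `qf`, 0 elsewhere), and, for every state `q ≠ q0` with positive
outgoing flow, there is an auxiliary real flow `z` dominated edgewise by `x`
carrying one unit from `q0` to `q` (the connectivity constraints). -/
def IsFlow {Q Act : Type} [DecidableEq Q] (T : Finset (Q × Act × Q))
    (q0 qf : Q) (x : Q × Act × Q → ℕ) : Prop :=
  (∀ t, t ∉ T → x t = 0) ∧
  (∀ q : Q, netFlow T (fun t => (x t : ℤ)) q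
      = if q = q0 then -1 else if q = qf then 1 else 0) ∧
  (∀ q : Q, q ≠ q0 → 0 < ∑ t ∈ T.filter (fun t => t.1 = q), x t →
    ∃ z : Q × Act × Q → ℝ,
      (∀ t, 0 ≤ z t ∧ z t ≤ (x t : ℝ)) ∧
      ∀ q' : Q, netFlow T z q'
          = if q' = q0 then -1 else if q' = q then 1 else 0)

/-- `l` is a run (walk) of the automaton from `q0` to `qf`: a nonempty list of
transitions of `T`, consecutively chained, starting at `q0` and ending at `qf`. -/
def IsRun {Q Act : Type} (T : Finset (Q × Act × Q)) (q0 qf : Q)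
    (l : List (Q × Act × Q)) : Prop :=
  (∀ t ∈ l, t ∈ T) ∧ l.Chain' (fun s t => s.2.2 = t.1) ∧
  ∃ h : l ≠ [], (l.head h).1 = q0 ∧ (l.getLast h).2.2 = qf

set_option linter.unusedSectionVars false

section Walks
variable {Q Act : Type} [DecidableEq Q] [DecidableEq Act]

inductive Walk (T : Finset (Q × Act × Q)) : Q → Q → List (Q × Act × Q) → Prop
  | nil (q : Q) : Walk T q q []
  | cons {s f : Q} {l : List (Q × Act × Q)} (e : Q × Act × Q) (he : e ∈ T)
      (hs : e.1 = s) (h : Walk T e.2.2 f l) : Walk T s f (e :: l)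

namespace Walk
variable {T : Finset (Q × Act × Q)} {s f m : Q} {l l₁ l₂ : List (Q × Act × Q)}

theorem append (h1 : Walk T s m l₁) (h2 : Walk T m f l₂) : Walk T s f (l₁ ++ l₂) := by
  induction h1 with
  | nil q => exact h2
  | cons e he hs h ih => exact .cons e he hs (ih h2)

theorem single {e : Q × Act × Q} (he : e ∈ T) : Walk T e.1 e.2.2 [e] :=
  .cons e he rfl (.nil _)

theorem mem_T (h : Walk T s f l) : ∀ t ∈ l, t ∈ T := by
  induction h with
  | nil q => simp
  | cons e he hs h ih =>
    intro t ht
    rcases List.mem_cons.mp ht with h' | h'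
    · exact h' ▸ he
    · exact ih t h'

theorem eq_of_nil (h : Walk T s f []) : s = f := by cases h; rfl

theorem head_src (h : Walk T s f l) (hl : l ≠ []) : (l.head hl).1 = s := by
  cases h with
  | nil => simp at hl
  | cons e he hs h => simpa using hs

theorem last_trg (h : Walk T s f l) (hl : l ≠ []) : (l.getLast hl).2.2 = f := by
  induction h with
  | nil => simp at hl
  | cons e he hs h ih =>
    rename_i l'
    cases l' with
    | nil => simpa using h.eq_of_nil
    | cons y ys => rw [List.getLast_cons (by simp)] ; exact ih (by simp)

theorem chain' (h : Walk T s f l) : l.Chain' (fun a b => a.2.2 = b.1) := by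
  induction h with
  | nil => exact List.IsChain.nil
  | cons e he hs h ih =>
    cases h with
    | nil => exact List.IsChain.singleton _
    | cons e2 he2 hs2 h2 =>
      exact List.IsChain.cons_cons hs2.symm ih

theorem split_at_edge (h : Walk T s f l) {e : Q × Act × Q} (hel : e ∈ l) :
    ∃ l₁ l₂, l = l₁ ++ e :: l₂ ∧ Walk T s e.1 l₁ ∧ Walk T e.2.2 f l₂ := by
  induction h with
  | nil => simp at hel
  | cons e' he' hs' h' ih =>
    rcases List.mem_cons.mp hel with h'' | h''
    · subst h''; exact ⟨[], _, rfl, hs' ▸ Walk.nil e.1, h'⟩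
    · obtain ⟨l₁, l₂, rfl, w1, w2⟩ := ih h''
      exact ⟨e' :: l₁, l₂, rfl, .cons e' he' hs' w1, w2⟩

theorem split_at_vertex (h : Walk T s f l) {v : Q}
    (hv : v = s ∨ ∃ e ∈ l, e.2.2 = v) :
    ∃ l₁ l₂, l = l₁ ++ l₂ ∧ Walk T s v l₁ ∧ Walk T v f l₂ := by
  rcases hv with rfl | ⟨e, hel, hev⟩
  · exact ⟨[], l, rfl, .nil _, h⟩
  · obtain ⟨l₁, l₂, rfl, w1, w2⟩ := h.split_at_edge hel
    refine ⟨l₁ ++ [e], l₂, by simp, w1.append ?_, hev ▸ w2⟩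
    exact hev ▸ Walk.single (h.mem_T e hel)

end Walk

/-- Build a walk from the run data. -/
theorem walk_of_list {T : Finset (Q × Act × Q)} :
    ∀ (l : List (Q × Act × Q)) (hl : l ≠ []), (∀ t ∈ l, t ∈ T) →
      l.Chain' (fun a b => a.2.2 = b.1) →
      Walk T ((l.head hl).1) ((l.getLast hl).2.2) l := by
  intro l
  induction l with
  | nil => simp
  | cons e l ih =>
    intro _ hmem hchain
    cases l with
    | nil => simpa using Walk.single (hmem e (by simp))
    | cons y ys =>
      have hch : e.2.2 = y.1 := (List.isChain_cons_cons.mp hchain).1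
      have ih' := ih (by simp) (fun t ht => hmem t (by simp [ht]))
        (List.isChain_cons_cons.mp hchain).2
      rw [List.getLast_cons (by simp)]
      exact Walk.cons e (hmem e (by simp)) rfl (by simpa [hch] using ih')

end Walks

section Counting
variable {Q Act : Type} [DecidableEq Q] [DecidableEq Act]
variable {T : Finset (Q × Act × Q)} {s f : Q} {l : List (Q × Act × Q)}

theorem netFlow_sub (x y : Q × Act × Q → ℤ) (q : Q) :
    netFlow T (fun t => x t - y t) q = netFlow T x q - netFlow T y q := by
  simp [netFlow, Finset.sum_sub_distrib]; ring

theorem netFlow_add (x y : Q × Act × Q → ℤ) (q : Q) :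
    netFlow T (fun t => x t + y t) q = netFlow T x q + netFlow T y q := by
  simp [netFlow, Finset.sum_add_distrib]; ring

theorem netFlow_single {e : Q × Act × Q} (he : e ∈ T) (q : Q) :
    netFlow T (fun t => if t = e then (1 : ℤ) else 0) q
      = (if q = e.2.2 then 1 else 0) - (if q = e.1 then 1 else 0) := by
  simp only [netFlow, Finset.sum_ite_eq' , Finset.mem_filter, he, true_and]
  congr 1 <;> rcases eq_or_ne q e.2.2 with h | h <;> rcases eq_or_ne q e.1 with h2 | h2 <;>
    simp [h, h2, eq_comm]

theorem Walk.netFlow_count (w : Walk T s f l) (q : Q) :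
    netFlow T (fun t => (l.count t : ℤ)) q
      = (if q = f then 1 else 0) - (if q = s then 1 else 0) := by
  induction w with
  | nil => simp [netFlow]
  | cons e he hs h ih =>
    rename_i s' f' l'
    have hfun : (fun t => (((e :: l').count t : ℕ) : ℤ))
        = fun t => ((l'.count t : ℕ) : ℤ) + (if t = e then (1 : ℤ) else 0) := by
      funext t
      rcases eq_or_ne t e with rfl | h2
      · simp [List.count_cons]
      · simp [List.count_cons, h2, Ne.symm h2]
    rw [hfun, netFlow_add, ih, netFlow_single he, hs]
    ring

theorem sum_count (hl : ∀ t ∈ l, t ∈ T) : ∑ t ∈ T, l.count t = l.length := by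
  induction l with
  | nil => simp
  | cons a l ih =>
    have ha : a ∈ T := hl a (by simp)
    have ih' := ih (fun t ht => hl t (by simp [ht]))
    have : ∀ t ∈ T, (a :: l).count t = l.count t + (if t = a then 1 else 0) := by
      intro t _
      rcases eq_or_ne t a with rfl | h2
      · simp [List.count_cons]
      · simp [List.count_cons, h2, Ne.symm h2]
    rw [Finset.sum_congr rfl this, Finset.sum_add_distrib, ih', Finset.sum_ite_eq' T a
      (fun _ => 1)]
    simp [ha]

theorem sum_map_count (g : Q × Act × Q → ℕ) (hl : ∀ t ∈ l, t ∈ T) :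
    (l.map g).sum = ∑ t ∈ T, g t * l.count t := by
  induction l with
  | nil => simp
  | cons a l ih =>
    have ha : a ∈ T := hl a (by simp)
    have ih' := ih (fun t ht => hl t (by simp [ht]))
    have : ∀ t ∈ T, g t * (a :: l).count t
        = g t * l.count t + (if t = a then g t else 0) := by
      intro t _
      rcases eq_or_ne t a with rfl | h2
      · simp [List.count_cons, Nat.mul_add]
      · simp [List.count_cons, h2, Ne.symm h2]
    rw [List.map_cons, List.sum_cons, Finset.sum_congr rfl this, Finset.sum_add_distrib,
      ← ih', Finset.sum_ite_eq' T a g]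
    simp [ha, Nat.add_comm]

end Counting

section Extract
variable {Q Act : Type} [DecidableEq Q] [DecidableEq Act]
variable {T : Finset (Q × Act × Q)}

theorem path_extract (f : Q) :
    ∀ (n : ℕ) (x : Q × Act × Q → ℕ) (s : Q), (∑ t ∈ T, x t ≤ n) →
      (∀ t ∉ T, x t = 0) → s ≠ f →
      (∀ q, netFlow T (fun t => (x t : ℤ)) q
        = (if q = f then 1 else 0) - (if q = s then 1 else 0)) →
      ∃ l, Walk T s f l ∧ ∀ t, l.count t ≤ x t := by
  intro n
  induction n with
  | zero =>
    intro x s hsum _ hsf hnf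
    exfalso
    -- netFlow at s is -1, but all x t = 0 on T
    have hx0 : ∀ t ∈ T, x t = 0 := by
      intro t ht
      have := Finset.single_le_sum (f := x) (fun i _ => Nat.zero_le _) ht
      omega
    have h1 : ∑ t ∈ T.filter (fun t => t.2.2 = s), ((x t : ℕ) : ℤ) = 0 :=
      Finset.sum_eq_zero (fun t ht => by rw [hx0 t (Finset.mem_filter.mp ht).1]; norm_num)
    have h2 : ∑ t ∈ T.filter (fun t => t.1 = s), ((x t : ℕ) : ℤ) = 0 :=
      Finset.sum_eq_zero (fun t ht => by rw [hx0 t (Finset.mem_filter.mp ht).1]; norm_num)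
    have := hnf s
    rw [netFlow, h1, h2] at this
    simp [hsf] at this
  | succ n ih =>
    intro x s hsum hsupp hsf hnf
    -- there is an out-edge at s with positive flow
    have hout : 0 < ∑ t ∈ T.filter (fun t => t.1 = s), x t := by
      by_contra h
      push_neg at h
      have h2 : ∑ t ∈ T.filter (fun t => t.1 = s), ((x t : ℕ) : ℤ) = 0 :=
        Finset.sum_eq_zero (fun t ht => by
          have := Finset.single_le_sum (f := x) (fun i _ => Nat.zero_le _) ht
          have : x t = 0 := by omega
          rw [this]; norm_num)
      have hz := hnf s
      rw [netFlow, h2] at hz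
      simp [hsf] at hz
      have hnn : (0:ℤ) ≤ ∑ t ∈ T.filter (fun t => t.2.2 = s), ((x t : ℕ) : ℤ) :=
        Finset.sum_nonneg (fun i _ => Int.natCast_nonneg _)
      omega
    obtain ⟨e, he, hxe⟩ : ∃ e ∈ T.filter (fun t => t.1 = s), 0 < x e := by
      by_contra h
      push_neg at h
      have : ∑ t ∈ T.filter (fun t => t.1 = s), x t = 0 :=
        Finset.sum_eq_zero (fun t ht => by have := h t ht; omega)
      omega
    obtain ⟨heT, hes⟩ := Finset.mem_filter.mp he
    set x' : Q × Act × Q → ℕ := Function.update x e (x e - 1) with hx'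
    have hcast : ∀ t, (x' t : ℤ) = (x t : ℤ) - (if t = e then 1 else 0) := by
      intro t
      rcases eq_or_ne t e with rfl | h2
      · simp [hx', Function.update_self]; omega
      · simp [hx', Function.update_of_ne h2, h2]
    have hnf' : ∀ q, netFlow T (fun t => (x' t : ℤ)) q
        = (if q = f then 1 else 0) - (if q = e.2.2 then 1 else 0) := by
      intro q
      have : (fun t => (x' t : ℤ)) = fun t => (x t : ℤ) - (if t = e then 1 else 0) :=
        funext hcast
      rw [this, netFlow_sub, hnf q, netFlow_single heT, hes]
      ring
    have hsupp' : ∀ t ∉ T, x' t = 0 := by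
      intro t ht
      have : t ≠ e := fun h => ht (h ▸ heT)
      simp [hx', Function.update_of_ne this, hsupp t ht]
    rcases eq_or_ne e.2.2 f with hef | hef
    · -- single edge finishes
      refine ⟨[e], hes ▸ hef ▸ Walk.single heT, ?_⟩
      intro t
      rcases eq_or_ne t e with rfl | h2
      · simp; exact hxe
      · simp [List.count_singleton', h2, Ne.symm h2]
    · -- recurse
      have hsum' : ∑ t ∈ T, x' t ≤ n := by
        have h1 : ∑ t ∈ T, x' t = (x e - 1) + ∑ t ∈ T \ {e}, x t :=
          Finset.sum_update_of_mem (f := x) heT (x e - 1)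
        have h2 : ∑ t ∈ T, x t = x e + ∑ t ∈ T \ {e}, x t := by
          rw [Finset.sum_eq_sum_sdiff_singleton_add heT x]; ring
        omega
      obtain ⟨l', wl', hcl'⟩ := ih x' e.2.2 hsum' hsupp' hef hnf'
      refine ⟨e :: l', Walk.cons e heT hes wl', ?_⟩
      intro t
      have := hcl' t
      rcases eq_or_ne t e with rfl | h2
      · simp only [hx', Function.update_self] at this
        simp [List.count_cons]
        omega
      · simp only [hx', Function.update_of_ne h2] at this
        simp [List.count_cons, h2, Ne.symm h2]
        omega

theorem cyc_extract (x : Q × Act × Q → ℕ) (hsupp : ∀ t ∉ T, x t = 0)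
    (hcirc : ∀ q, netFlow T (fun t => (x t : ℤ)) q = 0)
    {e0 : Q × Act × Q} (he0 : e0 ∈ T) (hx0 : 0 < x e0) :
    ∃ l, Walk T e0.1 e0.1 l ∧ l ≠ [] ∧ ∀ t, l.count t ≤ x t := by
  set x' : Q × Act × Q → ℕ := Function.update x e0 (x e0 - 1) with hx'
  have hcast : ∀ t, (x' t : ℤ) = (x t : ℤ) - (if t = e0 then 1 else 0) := by
    intro t
    rcases eq_or_ne t e0 with rfl | h2
    · simp [hx', Function.update_self]; omega
    · simp [hx', Function.update_of_ne h2, h2]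
  rcases eq_or_ne e0.2.2 e0.1 with hee | hee
  · refine ⟨[e0], hee ▸ Walk.single he0, by simp, ?_⟩
    intro t
    rcases eq_or_ne t e0 with rfl | h2
    · simp; exact hx0
    · simp [List.count_singleton', h2, Ne.symm h2]
  · have hnf' : ∀ q, netFlow T (fun t => (x' t : ℤ)) q
        = (if q = e0.1 then 1 else 0) - (if q = e0.2.2 then 1 else 0) := by
      intro q
      have : (fun t => (x' t : ℤ)) = fun t => (x t : ℤ) - (if t = e0 then 1 else 0) :=
        funext hcast
      rw [this, netFlow_sub, hcirc q, netFlow_single he0]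
      ring
    have hsupp' : ∀ t ∉ T, x' t = 0 := by
      intro t ht
      have : t ≠ e0 := fun h => ht (h ▸ he0)
      simp [hx', Function.update_of_ne this, hsupp t ht]
    obtain ⟨l', wl', hcl'⟩ := path_extract e0.1 (∑ t ∈ T, x' t) x' e0.2.2 le_rfl
      hsupp' hee hnf'
    refine ⟨e0 :: l', Walk.cons e0 he0 rfl wl', by simp, ?_⟩
    intro t
    have := hcl' t
    rcases eq_or_ne t e0 with rfl | h2
    · simp only [hx', Function.update_self] at this
      simp [List.count_cons]
      omega
    · simp only [hx', Function.update_of_ne h2] at this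
      simp [List.count_cons, h2, Ne.symm h2]
      omega

end Extract

section Reach
variable {Q Act : Type} [Fintype Q] [DecidableEq Q] [DecidableEq Act]
variable {T : Finset (Q × Act × Q)}

theorem reach_of_z (x : Q × Act × Q → ℕ) (hsupp : ∀ t ∉ T, x t = 0)
    (q0 v : Q) (z : Q × Act × Q → ℝ)
    (hz : ∀ t, 0 ≤ z t ∧ z t ≤ (x t : ℝ))
    (hnf : ∀ q', netFlow T z q' = if q' = q0 then -1 else if q' = v then 1 else 0) :
    ∃ p, Walk T q0 v p ∧ ∀ t ∈ p, 0 < x t := by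
  classical
  by_contra hcon
  set P : Q → Prop := fun u => ∃ p, Walk T q0 u p ∧ ∀ t ∈ p, 0 < x t with hP
  have hq0 : P q0 := ⟨[], Walk.nil q0, by simp⟩
  have hvP : ¬ P v := hcon
  have hvq0 : v ≠ q0 := fun h => hvP (h ▸ hq0)
  set S : Finset Q := Finset.univ.filter P with hS
  have hmemS : ∀ u, u ∈ S ↔ P u := by intro u; simp [hS]
  have key : ∀ t ∈ T, P t.1 → 0 < z t → P t.2.2 := by
    rintro t ht ⟨p, wp, hp⟩ hzt
    refine ⟨p ++ [t], wp.append (Walk.single ht), ?_⟩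
    intro u hu
    rcases List.mem_append.mp hu with h | h
    · exact hp u h
    · have : u = t := by simpa using h
      subst this
      have := (hz u).2
      have : (0:ℝ) < (x u : ℝ) := lt_of_lt_of_le hzt this
      exact_mod_cast this
  -- the two cut sums
  have hA : ∀ (g : Q × Act × Q → Q),
      ∑ u ∈ S, ∑ t ∈ T.filter (fun t => g t = u), z t
        = ∑ t ∈ T, if g t ∈ S then z t else 0 := by
    intro g
    rw [Finset.sum_comm' (s := S) (t := fun u => T.filter (fun t => g t = u))
      (t' := T) (s' := fun t => S.filter (fun u => g t = u)) ?_]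
    · refine Finset.sum_congr rfl ?_
      intro t _
      by_cases h : g t ∈ S
      · simp [Finset.filter_eq, Finset.filter_eq', h]
      · simp [Finset.filter_eq, Finset.filter_eq', h]
    · intro a b
      simp [Finset.mem_filter]
      tauto
  have hsum1 : ∑ u ∈ S, netFlow T z u
      = (∑ t ∈ T, if t.2.2 ∈ S then z t else 0) - ∑ t ∈ T, if t.1 ∈ S then z t else 0 := by
    simp only [netFlow, Finset.sum_sub_distrib]
    rw [hA (fun t => t.2.2), hA (fun t => t.1)]
  have hle : ∀ t ∈ T, (if t.1 ∈ S then z t else 0) ≤ (if t.2.2 ∈ S then z t else 0) := by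
    intro t ht
    have hz0 := (hz t).1
    by_cases h1 : t.1 ∈ S
    · rcases lt_or_eq_of_le hz0 with hlt | heq
      · have h2 : t.2.2 ∈ S := (hmemS _).mpr (key t ht ((hmemS _).mp h1) hlt)
        simp [h1, h2]
      · have hzt : z t = 0 := heq.symm
        simp [hzt]
    · simp only [if_neg h1]
      split
      · exact hz0
      · exact le_rfl
  have hge : (0:ℝ) ≤ ∑ u ∈ S, netFlow T z u := by
    rw [hsum1]
    have := Finset.sum_le_sum hle
    linarith
  have hval : ∑ u ∈ S, netFlow T z u = -1 := by
    have hterm : ∀ u ∈ S, netFlow T z u = if u = q0 then (-1:ℝ) else 0 := by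
      intro u hu
      rw [hnf u]
      rcases eq_or_ne u q0 with rfl | h
      · simp
      · have huv : u ≠ v := fun h' => hvP (h' ▸ (hmemS u).mp hu)
        simp [h, huv]
    rw [Finset.sum_congr rfl hterm, Finset.sum_ite_eq' S q0 (fun _ => (-1:ℝ))]
    simp [(hmemS q0).mpr hq0]
  linarith

end Reach

section Splice
variable {Q Act : Type} [DecidableEq Q] [DecidableEq Act]
variable {T : Finset (Q × Act × Q)}

theorem exists_crossing {V : Q → Prop} {s u : Q} {p : List (Q × Act × Q)}
    (w : Walk T s u p) (hs : V s) (hu : ¬ V u) :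
    ∃ t ∈ p, V t.1 ∧ ¬ V t.2.2 := by
  induction w with
  | nil => exact absurd hs hu
  | cons e he hes h ih =>
    by_cases h2 : V e.2.2
    · obtain ⟨t, ht, h3⟩ := ih h2 hu
      exact ⟨t, by simp [ht], h3⟩
    · exact ⟨e, by simp, hes ▸ hs, h2⟩

theorem splice (q0 qf : Q) :
    ∀ (n : ℕ) (r : Q × Act × Q → ℕ), (∑ t ∈ T, r t ≤ n) →
      (∀ t ∉ T, r t = 0) →
      (∀ q, netFlow T (fun t => (r t : ℤ)) q = 0) →
      ∀ l, Walk T q0 qf l →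
      (∀ e, 0 < r e → ∃ p, Walk T q0 e.1 p ∧ ∀ t ∈ p, t ∈ l ∨ 0 < r t) →
      ∃ l', Walk T q0 qf l' ∧ ∀ t, l'.count t = l.count t + r t := by
  intro n
  induction n with
  | zero =>
    intro r hsum hsupp _ l wl _
    refine ⟨l, wl, fun t => ?_⟩
    by_cases ht : t ∈ T
    · have := Finset.single_le_sum (f := r) (fun i _ => Nat.zero_le _) ht
      omega
    · rw [hsupp t ht]; omega
  | succ n ih =>
    intro r hsum hsupp hcirc l wl hreach
    by_cases h0 : ∑ t ∈ T, r t = 0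
    · refine ⟨l, wl, fun t => ?_⟩
      by_cases ht : t ∈ T
      · have := Finset.single_le_sum (f := r) (fun i _ => Nat.zero_le _) ht
        omega
      · rw [hsupp t ht]; omega
    · -- find an edge e1 with r e1 > 0 whose source is on l (or q0)
      obtain ⟨e0, he0T, he0⟩ : ∃ e ∈ T, 0 < r e := by
        by_contra h
        push_neg at h
        exact h0 (Finset.sum_eq_zero (fun t ht => by have := h t ht; omega))
      set V : Q → Prop := fun v => v = q0 ∨ ∃ e ∈ l, e.2.2 = v with hV
      obtain ⟨e1, he1V, he1r⟩ : ∃ e1, V e1.1 ∧ 0 < r e1 := by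
        by_cases hv0 : V e0.1
        · exact ⟨e0, hv0, he0⟩
        · obtain ⟨p, wp, hp⟩ := hreach e0 he0
          obtain ⟨t, htp, htV, htV2⟩ := exists_crossing wp (Or.inl rfl) hv0
          rcases hp t htp with h | h
          · exact absurd (Or.inr ⟨t, h, rfl⟩) htV2
          · exact ⟨t, htV, h⟩
      have he1T : e1 ∈ T := by
        by_contra h
        rw [hsupp e1 h] at he1r
        omega
      -- extract a nonempty cycle at e1.1
      obtain ⟨c, wc, hcne, hcr⟩ := cyc_extract r hsupp hcirc he1T he1r
      -- split the walk l at the vertex e1.1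
      obtain ⟨l₁, l₂, rfl, w1, w2⟩ := wl.split_at_vertex he1V
      set r' : Q × Act × Q → ℕ := fun t => r t - c.count t with hr'
      have hcastr' : ∀ t, (r' t : ℤ) = (r t : ℤ) - (c.count t : ℤ) := by
        intro t
        have := hcr t
        simp [hr']
        omega
      have hsum' : ∑ t ∈ T, r' t ≤ n := by
        have h1 : ∑ t ∈ T, r' t + ∑ t ∈ T, c.count t = ∑ t ∈ T, r t := by
          rw [← Finset.sum_add_distrib]
          exact Finset.sum_congr rfl (fun t _ => by have := hcr t; simp [hr']; omega)
        have h2 : ∑ t ∈ T, c.count t = c.length := sum_count wc.mem_T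
        have h3 : 0 < c.length := List.length_pos_iff.mpr hcne
        omega
      have hsupp' : ∀ t ∉ T, r' t = 0 := by
        intro t ht
        simp [hr', hsupp t ht]
      have hcirc' : ∀ q, netFlow T (fun t => (r' t : ℤ)) q = 0 := by
        intro q
        rw [funext hcastr', netFlow_sub, hcirc q, wc.netFlow_count q]
        ring
      have wl'' : Walk T q0 qf (l₁ ++ (c ++ l₂)) := w1.append (wc.append w2)
      have hreach' : ∀ e, 0 < r' e →
          ∃ p, Walk T q0 e.1 p ∧ ∀ t ∈ p, t ∈ l₁ ++ (c ++ l₂) ∨ 0 < r' t := by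
        intro e hre'
        have hre : 0 < r e := by have := hcr e; simp [hr'] at hre'; omega
        obtain ⟨p, wp, hp⟩ := hreach e hre
        refine ⟨p, wp, fun t htp => ?_⟩
        rcases hp t htp with h | h
        · left; rcases List.mem_append.mp h with h | h <;> simp [h]
        · by_cases h2 : 0 < r' t
          · exact Or.inr h2
          · have : 0 < c.count t := by simp [hr'] at h2; omega
            left
            have : t ∈ c := List.count_pos_iff.mp this
            simp [this]
      obtain ⟨l', wl', hc'⟩ := ih r' hsum' hsupp' hcirc' (l₁ ++ (c ++ l₂)) wl'' hreach'
      refine ⟨l', wl', fun t => ?_⟩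
      have h1 := hc' t
      have h2 := hcr t
      simp only [List.count_append] at h1 ⊢
      simp [hr'] at h1
      omega

end Splice

theorem netFlow_cast {Q Act : Type} [DecidableEq Q] {T : Finset (Q × Act × Q)}
    (g : Q × Act × Q → ℕ) (q : Q) :
    netFlow T (fun t => ((g t : ℕ) : ℝ)) q
      = ((netFlow T (fun t => ((g t : ℕ) : ℤ)) q : ℤ) : ℝ) := by
  simp only [netFlow]
  push_cast
  ring


/-- A contract automaton `T` (with single initial state `q0` and single final
state `qf`, requests indexed by `i : I`, and `offs act i` / `reqs act i`
counting the offers/requests on action `i` carried by the label `act`) admits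
weak agreement if and only if `max γ ≥ 0` in the linear program whose
variables are a valid flow `x ∈ F_{q0,qf}` and `γ ∈ ℝ`, subject to
`∑_t aⁱ_t x_t ≥ γ` for every `i`, where `aⁱ_t = offs − reqs ∈ {+1,−1,0}`. -/
theorem admits_weak_agreement_iff_lp {Q Act I : Type} [Fintype Q]
    [DecidableEq Q] [DecidableEq Act] [Fintype I]
    (T : Finset (Q × Act × Q)) (q0 qf : Q) (hne : q0 ≠ qf)
    (offs reqs : Act → I → ℕ) :
    (∃ γ : ℝ, 0 ≤ γ ∧ ∃ x : Q × Act × Q → ℕ, IsFlow T q0 qf x ∧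
        ∀ i : I,
          γ ≤ ((∑ t ∈ T, ((offs t.2.1 i : ℤ) - (reqs t.2.1 i : ℤ)) * (x t : ℤ) : ℤ) : ℝ))
      ↔
    (∃ l : List (Q × Act × Q), IsRun T q0 qf l ∧
        ∀ i : I, (l.map (fun t => reqs t.2.1 i)).sum ≤ (l.map (fun t => offs t.2.1 i)).sum) := by
  simp only [IsFlow, IsRun]
  constructor
  · rintro ⟨γ, hγ, x, ⟨hsupp, hcons, hconn⟩, hineq⟩
    have hnf : ∀ q, netFlow T (fun t => (x t : ℤ)) q
        = (if q = qf then 1 else 0) - (if q = q0 then 1 else 0) := by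
      intro q
      rw [hcons q]
      rcases eq_or_ne q q0 with rfl | h1
      · simp [hne]
      · rcases eq_or_ne q qf with rfl | h2
        · simp [h1]
        · simp [h1, h2]
    obtain ⟨l0, wl0, hcl0⟩ := path_extract qf (∑ t ∈ T, x t) x q0 le_rfl hsupp hne hnf
    set r : Q × Act × Q → ℕ := fun t => x t - l0.count t with hr
    have hxsum : ∀ t, l0.count t + r t = x t := fun t => by
      have := hcl0 t; simp [hr]; omega
    have hsuppr : ∀ t ∉ T, r t = 0 := fun t ht => by
      have h1 := hsupp t ht; have := hcl0 t; simp [hr]; omega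
    have hcircr : ∀ q, netFlow T (fun t => (r t : ℤ)) q = 0 := by
      intro q
      have hcast : ∀ t, (r t : ℤ) = (x t : ℤ) - (l0.count t : ℤ) := fun t => by
        have := hcl0 t; simp [hr]; omega
      rw [funext hcast, netFlow_sub, hnf q, wl0.netFlow_count q]
      ring
    have hreach : ∀ e, 0 < r e → ∃ p, Walk T q0 e.1 p ∧ ∀ t ∈ p, t ∈ l0 ∨ 0 < r t := by
      intro e hre
      have hxe : 0 < x e := by have := hxsum e; omega
      have heT : e ∈ T := by
        by_contra h
        rw [hsupp e h] at hxe
        omega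
      rcases eq_or_ne e.1 q0 with h1 | h1
      · exact ⟨[], h1 ▸ Walk.nil e.1, by simp⟩
      · have hpos : 0 < ∑ t ∈ T.filter (fun t => t.1 = e.1), x t := by
          refine lt_of_lt_of_le hxe (Finset.single_le_sum (fun i _ => Nat.zero_le _) ?_)
          simp [heT]
        obtain ⟨z, hz, hnfz⟩ := hconn e.1 h1 hpos
        obtain ⟨p, wp, hp⟩ := reach_of_z x hsupp q0 e.1 z hz hnfz
        refine ⟨p, wp, fun t htp => ?_⟩
        have hxt := hp t htp
        have := hxsum t
        by_cases h : 0 < r t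
        · exact Or.inr h
        · exact Or.inl (List.count_pos_iff.mp (by omega))
    obtain ⟨l, wl, hcnt⟩ := splice q0 qf (∑ t ∈ T, r t) r le_rfl hsuppr hcircr l0 wl0 hreach
    have hcx : ∀ t, l.count t = x t := fun t => by
      have := hcnt t; have := hxsum t; omega
    have hlne : l ≠ [] := fun h => hne (by subst h; exact wl.eq_of_nil)
    refine ⟨l, ⟨wl.mem_T, wl.chain', hlne, wl.head_src hlne, wl.last_trg hlne⟩, ?_⟩
    intro i
    have hposγ : (0:ℤ) ≤ ∑ t ∈ T, ((offs t.2.1 i : ℤ) - reqs t.2.1 i) * (x t : ℤ) := by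
      have := hineq i
      exact_mod_cast le_trans hγ this
    have hro : ((∑ t ∈ T, reqs t.2.1 i * x t : ℕ) : ℤ)
        ≤ ((∑ t ∈ T, offs t.2.1 i * x t : ℕ) : ℤ) := by
      push_cast
      have : ∑ t ∈ T, ((offs t.2.1 i : ℤ) - reqs t.2.1 i) * (x t : ℤ)
          = ∑ t ∈ T, (offs t.2.1 i : ℤ) * x t - ∑ t ∈ T, (reqs t.2.1 i : ℤ) * x t := by
        rw [← Finset.sum_sub_distrib]
        exact Finset.sum_congr rfl (fun t _ => by ring)
      omega
    have h1 : (l.map (fun t => reqs t.2.1 i)).sum = ∑ t ∈ T, reqs t.2.1 i * x t := by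
      rw [sum_map_count _ wl.mem_T]
      exact Finset.sum_congr rfl (fun t _ => by rw [hcx t])
    have h2 : (l.map (fun t => offs t.2.1 i)).sum = ∑ t ∈ T, offs t.2.1 i * x t := by
      rw [sum_map_count _ wl.mem_T]
      exact Finset.sum_congr rfl (fun t _ => by rw [hcx t])
    rw [h1, h2]
    exact_mod_cast hro
  · rintro ⟨l, ⟨hmem, hchain, hlne, hhead, hlast⟩, hwa⟩
    have wl : Walk T q0 qf l := by
      have := walk_of_list l hlne hmem hchain
      rwa [hhead, hlast] at this
    refine ⟨0, le_refl 0, fun t => l.count t, ⟨?_, ?_, ?_⟩, ?_⟩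
    · intro t ht
      exact List.count_eq_zero.mpr (fun h => ht (hmem t h))
    · intro q
      rw [wl.netFlow_count q]
      rcases eq_or_ne q q0 with rfl | h1
      · simp [hne, Ne.symm hne]
      · rcases eq_or_ne q qf with rfl | h2
        · simp [h1]
        · simp [h1, h2]
    · intro q hq hpos
      have hpos' : 0 < ∑ t ∈ T.filter (fun t => t.1 = q), l.count t := by
        simpa using hpos
      obtain ⟨e, he, hpe⟩ : ∃ e ∈ T.filter (fun t => t.1 = q), 0 < l.count e := by
        by_contra h
        push_neg at h
        have : ∑ t ∈ T.filter (fun t => t.1 = q), l.count t = 0 :=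
          Finset.sum_eq_zero (fun t ht => by have := h t ht; omega)
        omega
      have hel : e ∈ l := List.count_pos_iff.mp hpe
      obtain ⟨heT, heq⟩ := Finset.mem_filter.mp he
      obtain ⟨l₁, l₂, hsplit, w1, w2⟩ := wl.split_at_edge hel
      refine ⟨fun t => ((l₁.count t : ℕ) : ℝ), fun t => ⟨by positivity, ?_⟩, ?_⟩
      · have hsub : l₁.Sublist l := hsplit ▸ (l₁.sublist_append_left (e :: l₂))
        show ((l₁.count t : ℕ) : ℝ) ≤ ((l.count t : ℕ) : ℝ)
        exact_mod_cast hsub.count_le t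
      · intro q'
        rw [netFlow_cast, w1.netFlow_count q', heq]
        rcases eq_or_ne q' q0 with rfl | h1
        · simp [Ne.symm hq]
        · rcases eq_or_ne q' q with rfl | h2
          · simp [h1]
          · simp [h1, h2]
    · intro i
      have h1 : (l.map (fun t => reqs t.2.1 i)).sum = ∑ t ∈ T, reqs t.2.1 i * l.count t :=
        sum_map_count _ wl.mem_T
      have h2 : (l.map (fun t => offs t.2.1 i)).sum = ∑ t ∈ T, offs t.2.1 i * l.count t :=
        sum_map_count _ wl.mem_T
      have hro := hwa i
      rw [h1, h2] at hro
      have : ∑ t ∈ T, ((offs t.2.1 i : ℤ) - reqs t.2.1 i) * ((l.count t : ℕ) : ℤ)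
          = ∑ t ∈ T, (offs t.2.1 i : ℤ) * l.count t - ∑ t ∈ T, (reqs t.2.1 i : ℤ) * l.count t := by
        rw [← Finset.sum_sub_distrib]
        exact Finset.sum_congr rfl (fun t _ => by ring)
      have hz : (0:ℤ) ≤ ∑ t ∈ T, ((offs t.2.1 i : ℤ) - reqs t.2.1 i) * ((l.count t : ℕ) : ℤ) := by
        rw [this]
        have hc1 : ((∑ t ∈ T, reqs t.2.1 i * l.count t : ℕ) : ℤ)
            ≤ ((∑ t ∈ T, offs t.2.1 i * l.count t : ℕ) : ℤ) := by exact_mod_cast hro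
        push_cast at hc1
        omega
      exact_mod_cast hz
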